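/- Let n1, n2, n3, n4, m be nonnegative integers with n1 > n2, n4 ≥ n3, and m > n2; let q = max(n1, n2, n3, n4, m) and let Q be the q×q shift matrix over 𝔽₂. Then there exist q×q matrices G_A, G_B over 𝔽₂ such that, with G_S = Q^{q−n3} G_A Q^{q−n1} + Q^{q−n4} G_B Q^{q−n2} and G_M = Q^{q−n3} G_A Q^{q−m} + Q^{q−n4} G_B Q^{q−m}, one has G_M = 0 and rank(G_S) − dim(range(G_S) ∩ range(G_M)) = min(n1, n3). -/

import Mathlib

/-- The `q × q` lower shift matrix over `𝔽₂`: entry `(i, j)` is `1` iff `i = j + 1`. -/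
def shiftQ (q : ℕ) : Matrix (Fin q) (Fin q) (ZMod 2) :=
  Matrix.of fun i j => if (i : ℕ) = (j : ℕ) + 1 then 1 else 0

/-- Source-to-destination transfer matrix
`G_S = Q^(q-n3) G_A Q^(q-n1) + Q^(q-n4) G_B Q^(q-n2)`. -/
def GSmat (q n1 n2 n3 n4 : ℕ) (GA GB : Matrix (Fin q) (Fin q) (ZMod 2)) :
    Matrix (Fin q) (Fin q) (ZMod 2) :=
  shiftQ q ^ (q - n3) * GA * shiftQ q ^ (q - n1) +
    shiftQ q ^ (q - n4) * GB * shiftQ q ^ (q - n2)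

/-- Interference transfer matrix
`G_M = Q^(q-n3) G_A Q^(q-m) + Q^(q-n4) G_B Q^(q-m)`. -/
def GMmat (q n3 n4 m : ℕ) (GA GB : Matrix (Fin q) (Fin q) (ZMod 2)) :
    Matrix (Fin q) (Fin q) (ZMod 2) :=
  shiftQ q ^ (q - n3) * GA * shiftQ q ^ (q - m) +
    shiftQ q ^ (q - n4) * GB * shiftQ q ^ (q - m)

/-- The achievable rate `rank G_S - dim (range G_S ∩ range G_M)` of a linear scheme. -/
noncomputable def linRate (q : ℕ) (GS GM : Matrix (Fin q) (Fin q) (ZMod 2)) : ℕ :=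
  GS.rank - Module.finrank (ZMod 2)
    ↥(LinearMap.range GS.mulVecLin ⊓ LinearMap.range GM.mulVecLin)

open Matrix Finset

lemma shiftQ_pow (q k : ℕ) :
    shiftQ q ^ k = Matrix.of fun i j : Fin q =>
      if (i : ℕ) = (j : ℕ) + k then (1 : ZMod 2) else 0 := by
  induction k with
  | zero =>
    ext i j
    simp [Matrix.one_apply, Fin.ext_iff]
  | succ k ih =>
    ext i j
    rw [pow_succ, ih]
    simp only [Matrix.mul_apply, Matrix.of_apply, shiftQ]
    by_cases h : (j : ℕ) + 1 < q
    · rw [Finset.sum_eq_single (⟨(j : ℕ) + 1, h⟩ : Fin q)]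
      · show (if (i : ℕ) = (j : ℕ) + 1 + k then (1 : ZMod 2) else 0) *
            (if (j : ℕ) + 1 = (j : ℕ) + 1 then (1 : ZMod 2) else 0) =
            if (i : ℕ) = (j : ℕ) + (k + 1) then (1 : ZMod 2) else 0
        rw [if_pos rfl, mul_one]
        by_cases hi : (i : ℕ) = (j : ℕ) + (k + 1)
        · rw [if_pos (by omega : (i : ℕ) = (j : ℕ) + 1 + k), if_pos hi]
        · rw [if_neg (by omega : ¬ (i : ℕ) = (j : ℕ) + 1 + k), if_neg hi]
      · intro t _ ht
        exact mul_eq_zero_of_right _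
          (if_neg (fun hc => ht (Fin.ext hc)))
      · intro h'; exact absurd (Finset.mem_univ _) h'
    · rw [Finset.sum_eq_zero, if_neg (by omega)]
      intro t _
      exact mul_eq_zero_of_right _ (if_neg (by omega))

lemma shiftQ_pow_ge (q k : ℕ) (hk : q ≤ k) : shiftQ q ^ k = 0 := by
  rw [shiftQ_pow]
  ext i j
  simp only [Matrix.of_apply, Matrix.zero_apply]
  rw [if_neg (by omega)]

/-- The key explicit matrix: `Q^(q-n3) * (Q^(q-n1))ᵀ * Q^(q-n1)`. -/
lemma key_product (q n1 n3 : ℕ) (h1 : n1 ≤ q) (h3 : n3 ≤ q) :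
    shiftQ q ^ (q - n3) * (shiftQ q ^ (q - n1))ᵀ * shiftQ q ^ (q - n1) =
      Matrix.of fun i j : Fin q =>
        if (i : ℕ) = (j : ℕ) + (q - n3) ∧ (j : ℕ) < n1 then (1 : ZMod 2) else 0 := by
  have hD : (shiftQ q ^ (q - n1))ᵀ * shiftQ q ^ (q - n1) =
      Matrix.of fun l j : Fin q =>
        if l = j ∧ (j : ℕ) < n1 then (1 : ZMod 2) else 0 := by
    ext l j
    rw [shiftQ_pow]
    simp only [Matrix.mul_apply, Matrix.transpose_apply, Matrix.of_apply]
    by_cases h : (l : ℕ) + (q - n1) < q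
    · rw [Finset.sum_eq_single (⟨(l : ℕ) + (q - n1), h⟩ : Fin q)]
      · by_cases hlj : l = j
        · subst hlj
          rw [if_pos rfl, one_mul,
            if_pos (show l = l ∧ (l : ℕ) < n1 from ⟨rfl, by omega⟩)]
        · rw [if_neg (show ¬ (l = j ∧ (j : ℕ) < n1) from fun hc => hlj hc.1)]
          exact mul_eq_zero_of_right _
            (if_neg (fun hc : (l : ℕ) + (q - n1) = (j : ℕ) + (q - n1) =>
              hlj (Fin.ext (Nat.add_right_cancel hc))))
      · intro t _ ht
        exact mul_eq_zero_of_left (if_neg (fun hc => ht (Fin.ext hc))) _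
      · intro h'; exact absurd (Finset.mem_univ _) h'
    · rw [Finset.sum_eq_zero,
        if_neg (show ¬ (l = j ∧ (j : ℕ) < n1) from
          fun hc => by obtain ⟨h1', h2'⟩ := hc; subst h1'; omega)]
      intro t _
      exact mul_eq_zero_of_left (if_neg (by omega)) _
  rw [mul_assoc, hD, shiftQ_pow]
  ext i j
  simp only [Matrix.mul_apply, Matrix.of_apply]
  rw [Finset.sum_eq_single j]
  · by_cases hj : (j : ℕ) < n1
    · rw [if_pos (show j = j ∧ (j : ℕ) < n1 from ⟨rfl, hj⟩), mul_one]
      by_cases hi : (i : ℕ) = (j : ℕ) + (q - n3)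
      · rw [if_pos hi,
          if_pos (show (i : ℕ) = (j : ℕ) + (q - n3) ∧ (j : ℕ) < n1 from ⟨hi, hj⟩)]
      · rw [if_neg hi,
          if_neg (show ¬ ((i : ℕ) = (j : ℕ) + (q - n3) ∧ (j : ℕ) < n1) from
            fun hc => hi hc.1)]
    · rw [if_neg (show ¬ (j = j ∧ (j : ℕ) < n1) from fun hc => hj hc.2), mul_zero,
        if_neg (show ¬ ((i : ℕ) = (j : ℕ) + (q - n3) ∧ (j : ℕ) < n1) from
          fun hc => hj hc.2)]
  · intro t _ ht
    exact mul_eq_zero_of_right _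
      (if_neg (show ¬ (t = j ∧ (j : ℕ) < n1) from fun hc => ht hc.1))
  · intro h'; exact absurd (Finset.mem_univ _) h'

lemma rank_M (q n1 n3 : ℕ) (h1 : n1 ≤ q) (h3 : n3 ≤ q) :
    (Matrix.of fun i j : Fin q =>
        if (i : ℕ) = (j : ℕ) + (q - n3) ∧ (j : ℕ) < n1 then (1 : ZMod 2) else 0).rank
      = min n1 n3 := by
  set M : Matrix (Fin q) (Fin q) (ZMod 2) :=
    Matrix.of fun i j : Fin q =>
      if (i : ℕ) = (j : ℕ) + (q - n3) ∧ (j : ℕ) < n1 then (1 : ZMod 2) else 0 with hM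
  have hle : ∀ j : Fin (min n1 n3), (j : ℕ) + (q - n3) < q := by
    intro j
    have := j.isLt
    omega
  set b : Fin (min n1 n3) → (Fin q → ZMod 2) :=
    fun j => Pi.single (⟨(j : ℕ) + (q - n3), hle j⟩ : Fin q) 1 with hb
  have hcol : ∀ (j : Fin q) (hj : (j : ℕ) < min n1 n3),
      Mᵀ j = b ⟨(j : ℕ), hj⟩ := by
    intro j hj
    funext i
    simp only [hb, Matrix.transpose_apply, hM, Matrix.of_apply]
    rw [Pi.single_apply]
    by_cases h : i = (⟨(j : ℕ) + (q - n3), hle ⟨(j : ℕ), hj⟩⟩ : Fin q)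
    · rw [if_pos h, if_pos]
      refine ⟨?_, by omega⟩
      rw [h]
    · rw [if_neg h, if_neg]
      intro hc
      exact h (Fin.ext hc.1)
  have hcol0 : ∀ j : Fin q, ¬ ((j : ℕ) < min n1 n3) → Mᵀ j = 0 := by
    intro j hj
    funext i
    simp only [Matrix.transpose_apply, hM, Matrix.of_apply, Pi.zero_apply]
    rw [if_neg]
    intro hc
    have := i.isLt
    omega
  have hspan : LinearMap.range M.mulVecLin =
      Submodule.span (ZMod 2) (Set.range b) := by
    rw [Matrix.range_mulVecLin]
    apply le_antisymm
    · rw [Submodule.span_le]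
      rintro x ⟨j, rfl⟩
      by_cases hj : (j : ℕ) < min n1 n3
      · rw [show M.col j = Mᵀ j from rfl, hcol j hj]
        exact Submodule.subset_span ⟨_, rfl⟩
      · rw [show M.col j = Mᵀ j from rfl, hcol0 j hj]
        exact Submodule.zero_mem _
    · rw [Submodule.span_le]
      rintro x ⟨j, rfl⟩
      have hjq : (j : ℕ) < q := by have := j.isLt; omega
      have : b j = Mᵀ ⟨(j : ℕ), hjq⟩ := by
        rw [hcol ⟨(j : ℕ), hjq⟩ (by simpa using j.isLt)]
      rw [this]
      exact Submodule.subset_span ⟨_, rfl⟩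
  have hinj : Function.Injective fun j : Fin (min n1 n3) =>
      (⟨(j : ℕ) + (q - n3), hle j⟩ : Fin q) := by
    intro a c hac
    have : (a : ℕ) + (q - n3) = (c : ℕ) + (q - n3) := by
      simpa [Fin.ext_iff] using hac
    exact Fin.ext (by omega)
  have hli : LinearIndependent (ZMod 2) b := by
    have h0 := (Pi.basisFun (ZMod 2) (Fin q)).linearIndependent
    have hbe : b = (⇑(Pi.basisFun (ZMod 2) (Fin q)) ∘
        fun j : Fin (min n1 n3) => (⟨(j : ℕ) + (q - n3), hle j⟩ : Fin q)) := by
      funext j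
      simp [hb, Pi.basisFun_apply]
    rw [hbe]
    exact h0.comp _ hinj
  rw [Matrix.rank, hspan, finrank_span_eq_card hli, Fintype.card_fin]

/-- Case `n1 > n2`, `n4 ≥ n3`, `m > n2`: the upper bound is achievable with `G_M = 0`. -/
theorem rate_achievable_case4
    (n1 n2 n3 n4 m q : ℕ) (hq : q = max n1 (max n2 (max n3 (max n4 m))))
    (h12 : n2 < n1) (h34 : n3 ≤ n4) (hm : n2 < m) :
    ∃ GA GB : Matrix (Fin q) (Fin q) (ZMod 2),
      GMmat q n3 n4 m GA GB = 0 ∧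
      linRate q (GSmat q n1 n2 n3 n4 GA GB) (GMmat q n3 n4 m GA GB)
        = min n1 n3 := by
  have h1q : n1 ≤ q := by omega
  have h2q : n2 ≤ q := by omega
  have h3q : n3 ≤ q := by omega
  have h4q : n4 ≤ q := by omega
  have hq1 : 1 ≤ q := by omega
  haveI : Nonempty (Fin q) := ⟨⟨0, by omega⟩⟩
  set GA : Matrix (Fin q) (Fin q) (ZMod 2) := (shiftQ q ^ (q - n1))ᵀ with hGA
  set GB : Matrix (Fin q) (Fin q) (ZMod 2) := shiftQ q ^ (n4 - n3) * GA with hGB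
  have hBB : shiftQ q ^ (q - n4) * GB = shiftQ q ^ (q - n3) * GA := by
    rw [hGB, ← mul_assoc, ← pow_add]
    congr 2
    omega
  have h2 : ∀ X : Matrix (Fin q) (Fin q) (ZMod 2), X + X = 0 := by
    intro X
    ext i j
    simp only [Matrix.add_apply, Matrix.zero_apply]
    have : ∀ x : ZMod 2, x + x = 0 := by decide
    exact this _
  have hGM : GMmat q n3 n4 m GA GB = 0 := by
    unfold GMmat
    rw [mul_assoc (shiftQ q ^ (q - n4)), ← mul_assoc (shiftQ q ^ (q - n4)) GB, hBB]
    exact h2 _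
  refine ⟨GA, GB, hGM, ?_⟩
  set M : Matrix (Fin q) (Fin q) (ZMod 2) :=
    Matrix.of fun i j : Fin q =>
      if (i : ℕ) = (j : ℕ) + (q - n3) ∧ (j : ℕ) < n1 then (1 : ZMod 2) else 0 with hM
  set N : Matrix (Fin q) (Fin q) (ZMod 2) := shiftQ q ^ (n1 - n2) with hN
  have hGS : GSmat q n1 n2 n3 n4 GA GB = M * (1 + N) := by
    unfold GSmat
    rw [mul_assoc (shiftQ q ^ (q - n4)), ← mul_assoc (shiftQ q ^ (q - n4)) GB, hBB]
    have hsplit : shiftQ q ^ (q - n2) = shiftQ q ^ (q - n1) * N := by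
      rw [hN, ← pow_add]
      congr 1
      omega
    have hKP : shiftQ q ^ (q - n3) * GA * shiftQ q ^ (q - n1) = M := by
      rw [hGA, hM]; exact key_product q n1 n3 h1q h3q
    rw [hsplit, ← mul_assoc (shiftQ q ^ (q - n3) * GA) (shiftQ q ^ (q - n1)) N, hKP,
      mul_add, mul_one]
  have hNpow : N ^ (2 ^ q) = 0 := by
    rw [hN, ← pow_mul]
    apply pow_eq_zero_of_le _ (shiftQ_pow_ge q q le_rfl)
    calc q ≤ 2 ^ q := (Nat.lt_two_pow_self (n := q)).le
      _ ≤ (n1 - n2) * 2 ^ q := Nat.le_mul_of_pos_left _ (by omega)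
  have hunit : IsUnit (1 + N) := by
    haveI : Fact (Nat.Prime 2) := ⟨Nat.prime_two⟩
    have hpow : (1 + N) ^ (2 ^ q) = 1 := by
      rw [add_pow_char_pow_of_commute 2 q (Commute.one_left N), one_pow, hNpow, add_zero]
    exact IsUnit.of_pow_eq_one hpow (by positivity)
  have hdet : IsUnit (1 + N).det := (Matrix.isUnit_iff_isUnit_det _).mp hunit
  rw [hGM]
  unfold linRate
  rw [hGS, Matrix.rank_mul_eq_left_of_isUnit_det _ _ hdet, rank_M q n1 n3 h1q h3q]
  have hzero : LinearMap.range (0 : Matrix (Fin q) (Fin q) (ZMod 2)).mulVecLin = ⊥ := by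
    rw [Matrix.mulVecLin_zero, LinearMap.range_zero]
  rw [hzero, inf_bot_eq, finrank_bot, Nat.sub_zero]
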